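/- There exists a constant C > 0 such that for all real x ≥ 1, the number of powerful natural numbers not exceeding x is at most C x^{1/2}. -/

import Mathlib

open Finset
open scoped Classical

/-- Number of distinct exponents in the prime factorization of `n`. -/
noncomputable def fexp (n : ℕ) : ℕ :=
  (n.primeFactors.image fun p => n.factorization p).card

/-- `n` is powerful if every prime dividing `n` divides it at least twice. -/
def Powerful (n : ℕ) : Prop :=
  0 < n ∧ ∀ p : ℕ, p.Prime → p ∣ n → p ^ 2 ∣ n

/-- Dedekind `ψ` function, as a real number. -/
noncomputable def dedekindPsi (n : ℕ) : ℝ :=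
  (n : ℝ) * ∏ p ∈ n.primeFactors, (1 + 1 / (p : ℝ))

noncomputable def rho : ℕ → ℕ → ℝ
  | 0, _ => 0
  | 1, n => if n = 1 then 1 else 0
  | (k + 2), n =>
      if n = 1 ∨ ¬ Squarefree n then 0
      else (1 / ((n : ℝ) - 1)) * ∑ d ∈ n.divisors.filter (· < n), rho (k + 1) d

/-- `g(n) = ω(n) - f(n)`. -/
noncomputable def gexp (n : ℕ) : ℕ := n.primeFactors.card - fexp n

/-- `n` is special if all exponents in its prime factorization are distinct. -/
noncomputable def Special (n : ℕ) : Prop := fexp n = n.primeFactors.card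

lemma powerful_decomp : ∀ n : ℕ, Powerful n → ∃ a b : ℕ, 0 < a ∧ 0 < b ∧ n = a ^ 2 * b ^ 3 := by
  intro n
  induction n using Nat.strong_induction_on with
  | _ n ih =>
    intro hn
    rcases eq_or_ne n 1 with rfl | hne
    · exact ⟨1, 1, one_pos, one_pos, by norm_num⟩
    obtain ⟨p, hp, hpn⟩ := Nat.exists_prime_and_dvd hne
    have hn0 : n ≠ 0 := hn.1.ne'
    set e := n.factorization p with he
    set m := n / p ^ e with hm
    have hnm : p ^ e * m = n := Nat.ordProj_mul_ordCompl_eq_self n p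
    have hpm : ¬ p ∣ m := Nat.not_dvd_ordCompl hp hn0
    have hm0 : 0 < m := Nat.ordCompl_pos p hn0
    have he1 : 1 ≤ e := (Nat.Prime.factorization_pos_of_dvd hp hn0 hpn)
    have he2 : 2 ≤ e := (Nat.Prime.pow_dvd_iff_le_factorization hp hn0).mp (hn.2 p hp hpn)
    have hmlt : m < n := by
      have : 1 < p ^ e := Nat.one_lt_pow (by omega) hp.one_lt
      calc m = 1 * m := (one_mul m).symm
        _ < p ^ e * m := (Nat.mul_lt_mul_right hm0).mpr this
        _ = n := hnm
    have hmpow : Powerful m := by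
      refine ⟨hm0, fun q hq hqm => ?_⟩
      have hqp : q ≠ p := fun h => hpm (h ▸ hqm)
      have hqn : q ∣ n := hqm.trans (Dvd.intro_left _ hnm)
      have h2 : 2 ≤ n.factorization q :=
        (Nat.Prime.pow_dvd_iff_le_factorization hq hn0).mp (hn.2 q hq hqn)
      have : m.factorization q = n.factorization q := by
        rw [hm, Nat.factorization_ordCompl n p, Finsupp.erase_ne hqp]
      exact (Nat.Prime.pow_dvd_iff_le_factorization hq hm0.ne').mpr (by omega)
    have hp0 : 0 < p := hp.pos
    obtain ⟨a, b, ha, hb, hab⟩ := ih m hmlt hmpow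
    rcases Nat.even_or_odd e with heven | hodd
    · obtain ⟨c, hc⟩ := heven
      refine ⟨p ^ c * a, b, by positivity, hb, ?_⟩
      rw [← hnm, hab, hc]
      ring
    · obtain ⟨c, hc⟩ := hodd
      have hc1 : 1 ≤ c := by omega
      refine ⟨p ^ (c - 1) * a, p * b, by positivity, by positivity, ?_⟩
      rw [← hnm, hab]
      have : e = 2 * (c - 1) + 3 := by omega
      rw [this]
      ring

noncomputable def pdec (n : ℕ) : ℕ × ℕ :=
  if h : Powerful n then
    ⟨(powerful_decomp n h).choose, (powerful_decomp n h).choose_spec.choose⟩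
  else (0, 0)

lemma pdec_spec {n : ℕ} (h : Powerful n) :
    0 < (pdec n).1 ∧ 0 < (pdec n).2 ∧ n = (pdec n).1 ^ 2 * (pdec n).2 ^ 3 := by
  rw [pdec, dif_pos h]
  exact (powerful_decomp n h).choose_spec.choose_spec

theorem stmt_5 :
    ∃ C : ℝ, 0 < C ∧ ∀ x : ℝ, 1 ≤ x →
      (((Finset.Icc 1 ⌊x⌋₊).filter fun n => Powerful n).card : ℝ) ≤ C * x ^ ((1 : ℝ) / 2) := by
  have hsum : Summable (fun b : ℕ => (b : ℝ) ^ (-(3/2) : ℝ)) :=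
    Real.summable_nat_rpow.mpr (by norm_num)
  set C₀ : ℝ := ∑' b : ℕ, (b : ℝ) ^ (-(3/2) : ℝ) with hC₀
  have hC₀0 : 0 ≤ C₀ := tsum_nonneg fun b => Real.rpow_nonneg (Nat.cast_nonneg b) _
  refine ⟨C₀ + 1, by linarith, fun x hx => ?_⟩
  have hx0 : (0 : ℝ) ≤ x := by linarith
  set N := ⌊x⌋₊ with hN
  have hNx : (N : ℝ) ≤ x := Nat.floor_le hx0
  set P := (Finset.Icc 1 N).filter fun n => Powerful n with hP
  -- fiberwise count
  have hfib : ∀ n ∈ P, (pdec n).2 ∈ Finset.Icc 1 N := by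
    intro n hn
    simp only [hP, mem_filter, Finset.mem_Icc] at hn
    obtain ⟨⟨hn1, hnN⟩, hpow⟩ := hn
    obtain ⟨ha, hb, hab⟩ := pdec_spec hpow
    have hble : (pdec n).2 ≤ n := by
      calc (pdec n).2 ≤ (pdec n).2 ^ 3 := Nat.le_self_pow (by norm_num) _
        _ ≤ (pdec n).1 ^ 2 * (pdec n).2 ^ 3 := Nat.le_mul_of_pos_left _ (by positivity)
        _ = n := hab.symm
    exact Finset.mem_Icc.mpr ⟨hb, hble.trans hnN⟩
  have hcard : P.card = ∑ b ∈ Finset.Icc 1 N, (P.filter fun n => (pdec n).2 = b).card :=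
    Finset.card_eq_sum_card_fiberwise hfib
  -- per-fiber bound
  have hfibcard : ∀ b ∈ Finset.Icc 1 N,
      (P.filter fun n => (pdec n).2 = b).card ≤ Nat.sqrt (N / b ^ 3) := by
    intro b hb
    have := Finset.card_le_card_of_injOn (fun n => (pdec n).1)
      (s := P.filter fun n => (pdec n).2 = b)
      (t := Finset.Icc 1 (Nat.sqrt (N / b ^ 3)))
      ?_ ?_
    · simpa using this
    · intro n hn
      simp only [hP, Finset.mem_coe, mem_filter, Finset.mem_Icc] at hn
      obtain ⟨⟨⟨hn1, hnN⟩, hpow⟩, hb2⟩ := hn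
      obtain ⟨ha, hbpos, hab⟩ := pdec_spec hpow
      have h1 : (pdec n).1 ^ 2 * b ^ 3 ≤ N := by rw [← hb2, ← hab]; exact hnN
      have hb3 : 0 < b ^ 3 := by
        have : 0 < b := (Finset.mem_Icc.mp hb).1
        positivity
      have h2 : (pdec n).1 ^ 2 ≤ N / b ^ 3 := (Nat.le_div_iff_mul_le hb3).mpr h1
      refine Finset.mem_Icc.mpr ⟨ha, Nat.le_sqrt.mpr ?_⟩
      calc (pdec n).1 * (pdec n).1 = (pdec n).1 ^ 2 := (sq _).symm
        _ ≤ N / b ^ 3 := h2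
    · intro n hn m hm hnm
      simp only [hP, Finset.mem_coe, Finset.mem_filter] at hn hm
      obtain ⟨⟨_, hpn⟩, hbn⟩ := hn
      obtain ⟨⟨_, hpm⟩, hbm⟩ := hm
      have e1 := (pdec_spec hpn).2.2
      have e2 := (pdec_spec hpm).2.2
      simp only at hnm
      rw [e1, e2, hnm, hbn, hbm]
  -- real bound per b
  have hreal : ∀ b ∈ Finset.Icc 1 N,
      ((Nat.sqrt (N / b ^ 3) : ℕ) : ℝ) ≤ x ^ ((1:ℝ)/2) * (b : ℝ) ^ (-(3/2) : ℝ) := by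
    intro b hb
    have hb1 : 1 ≤ b := (Finset.mem_Icc.mp hb).1
    have hbr : (0:ℝ) < (b:ℝ) := by exact_mod_cast hb1
    set K := Nat.sqrt (N / b ^ 3) with hK
    have hK2 : K ^ 2 ≤ N / b ^ 3 := Nat.sqrt_le' _
    have h1 : K ^ 2 * b ^ 3 ≤ N := by
      calc K ^ 2 * b ^ 3 ≤ (N / b ^ 3) * b ^ 3 := by
            have : K ^ 2 ≤ N / b ^ 3 := hK2
            exact Nat.mul_le_mul_right _ this
        _ ≤ N := Nat.div_mul_le_self _ _
    have h1r : ((K : ℝ)) ^ 2 * (b : ℝ) ^ 3 ≤ x := by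
      calc ((K : ℝ)) ^ 2 * (b : ℝ) ^ 3 = ((K ^ 2 * b ^ 3 : ℕ) : ℝ) := by push_cast; ring
        _ ≤ (N : ℝ) := by exact_mod_cast h1
        _ ≤ x := hNx
    have hRHS : (0:ℝ) ≤ x ^ ((1:ℝ)/2) * (b : ℝ) ^ (-(3/2) : ℝ) := by positivity
    have eA : (x ^ ((1:ℝ)/2)) ^ 2 = x := by
      rw [← Real.rpow_natCast (x ^ ((1:ℝ)/2)) 2, ← Real.rpow_mul hx0]
      norm_num
    have eB : ((b:ℝ) ^ (-(3/2) : ℝ)) ^ 2 = ((b:ℝ) ^ 3)⁻¹ := by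
      rw [← Real.rpow_natCast ((b:ℝ) ^ (-(3/2) : ℝ)) 2, ← Real.rpow_mul hbr.le,
          ← Real.rpow_natCast (b:ℝ) 3, ← Real.rpow_neg hbr.le]
      norm_num
    have hsq : ((K:ℝ)) ^ 2 ≤ (x ^ ((1:ℝ)/2) * (b : ℝ) ^ (-(3/2) : ℝ)) ^ 2 := by
      rw [mul_pow, eA, eB, ← div_eq_mul_inv, le_div_iff₀ (by positivity)]
      exact h1r
    exact (pow_le_pow_iff_left₀ (by positivity) hRHS two_ne_zero).mp hsq
  -- assemble
  rw [hcard]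
  push_cast
  calc (∑ b ∈ Finset.Icc 1 N, ((P.filter fun n => (pdec n).2 = b).card : ℝ))
      ≤ ∑ b ∈ Finset.Icc 1 N, x ^ ((1:ℝ)/2) * (b : ℝ) ^ (-(3/2) : ℝ) := by
        refine Finset.sum_le_sum fun b hb => ?_
        exact le_trans (by exact_mod_cast hfibcard b hb) (hreal b hb)
    _ = x ^ ((1:ℝ)/2) * ∑ b ∈ Finset.Icc 1 N, (b : ℝ) ^ (-(3/2) : ℝ) := by
        rw [Finset.mul_sum]
    _ ≤ x ^ ((1:ℝ)/2) * C₀ := by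
        refine mul_le_mul_of_nonneg_left ?_ (by positivity)
        exact Summable.sum_le_tsum _ (fun b _ => Real.rpow_nonneg (Nat.cast_nonneg b) _) hsum
    _ ≤ (C₀ + 1) * x ^ ((1:ℝ)/2) := by
        rw [mul_comm]
        have : (0:ℝ) ≤ x ^ ((1:ℝ)/2) := by positivity
        nlinarith
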